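/- arXiv:2406.14285 — 2 statements merged into one kernel-verified Lean document; each statement's English description precedes it below -/
import Mathlib

section
/- Let d ≥ 2. The second frame potential of the Haar measure equals 2: ∫_{U(d)} |tr U|⁴ dμ(U) = 2. -/
open MeasureTheory Matrix
open scoped Matrix ComplexConjugate

noncomputable instance (d : ℕ) : MeasurableSpace (Matrix.unitaryGroup (Fin d) ℂ) := borel _
instance (d : ℕ) : BorelSpace (Matrix.unitaryGroup (Fin d) ℂ) := ⟨rfl⟩

namespace FP

instance (d : ℕ) : MeasurableMul (Matrix.unitaryGroup (Fin d) ℂ) :=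
  ⟨fun c => (continuous_mul_left c).measurable, fun c => (continuous_mul_right c).measurable⟩

variable {d : ℕ}

/-- entry of a unitary matrix -/
def ent (U : Matrix.unitaryGroup (Fin d) ℂ) (i j : Fin d) : ℂ := (U : Matrix (Fin d) (Fin d) ℂ) i j

lemma ent_mul (U V : Matrix.unitaryGroup (Fin d) ℂ) (i j : Fin d) :
    ent (U * V) i j = ∑ k, ent U i k * ent V k j := by
  simp [ent, Matrix.mul_apply]

lemma row_ortho (U : Matrix.unitaryGroup (Fin d) ℂ) (i i' : Fin d) :
    ∑ j, ent U i j * conj (ent U i' j) = if i = i' then 1 else 0 := by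
  have h := (Unitary.mem_iff.mp U.2).2
  have h2 := congrArg (fun M => M i i') h
  simp only [Matrix.mul_apply, Matrix.star_eq_conjTranspose, Matrix.conjTranspose_apply,
    Matrix.one_apply] at h2
  simpa [ent, RCLike.star_def] using h2

lemma row_norm (U : Matrix.unitaryGroup (Fin d) ℂ) (i : Fin d) :
    ∑ j, ent U i j * conj (ent U i j) = 1 := by
  simpa using row_ortho U i i

lemma ent_bound (U : Matrix.unitaryGroup (Fin d) ℂ) (i j : Fin d) : ‖ent U i j‖ ≤ 1 := by
  have h : ((∑ k, ‖ent U i k‖ ^ 2 : ℝ) : ℂ) = 1 := by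
    push_cast
    rw [← row_norm U i]
    congr 1; ext k
    rw [Complex.mul_conj, Complex.normSq_eq_norm_sq]
    push_cast; ring
  have h' : (∑ k, ‖ent U i k‖ ^ 2 : ℝ) = 1 := by exact_mod_cast h
  have hle : ‖ent U i j‖ ^ 2 ≤ 1 := by
    rw [← h']
    apply Finset.single_le_sum (f := fun k => ‖ent U i k‖ ^ 2)
    · intro k _; positivity
    · exact Finset.mem_univ j
  nlinarith [norm_nonneg (ent U i j)]

lemma continuous_ent (i j : Fin d) : Continuous (fun U : Matrix.unitaryGroup (Fin d) ℂ => ent U i j) :=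
  continuous_subtype_val.matrix_elem i j

variable (μ : Measure (Matrix.unitaryGroup (Fin d) ℂ)) [IsProbabilityMeasure μ]

lemma integrable_mono4 (i1 j1 i2 j2 i3 j3 i4 j4 : Fin d) :
    Integrable (fun U => ent U i1 j1 * ent U i2 j2 * conj (ent U i3 j3) * conj (ent U i4 j4)) μ := by
  have hc : Continuous (fun U : Matrix.unitaryGroup (Fin d) ℂ =>
      ent U i1 j1 * ent U i2 j2 * conj (ent U i3 j3) * conj (ent U i4 j4)) := by
    exact (((continuous_ent i1 j1).mul (continuous_ent i2 j2)).mul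
      (Complex.continuous_conj.comp (continuous_ent i3 j3))).mul
      (Complex.continuous_conj.comp (continuous_ent i4 j4))
  refine ⟨hc.measurable.aestronglyMeasurable, ?_⟩
  apply MeasureTheory.HasFiniteIntegral.of_bounded (C := 1)
  filter_upwards with U
  simp only [norm_mul, Complex.norm_conj]
  have h0 : ∀ (a b : Fin d), 0 ≤ ‖ent U a b‖ := fun a b => norm_nonneg _
  have h1 := ent_bound U i1 j1; have h2 := ent_bound U i2 j2
  have h3 := ent_bound U i3 j3; have h4 := ent_bound U i4 j4
  calc ‖ent U i1 j1‖ * ‖ent U i2 j2‖ * ‖ent U i3 j3‖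
        * ‖ent U i4 j4‖ ≤ 1 * 1 * 1 * 1 := by
        gcongr <;> first | exact h0 _ _ | assumption
    _ = 1 := by norm_num

lemma integrable_mono2 (i1 j1 i3 j3 : Fin d) :
    Integrable (fun U => ent U i1 j1 * conj (ent U i3 j3)) μ := by
  have hc : Continuous (fun U : Matrix.unitaryGroup (Fin d) ℂ =>
      ent U i1 j1 * conj (ent U i3 j3)) :=
    (continuous_ent i1 j1).mul (Complex.continuous_conj.comp (continuous_ent i3 j3))
  refine ⟨hc.measurable.aestronglyMeasurable, ?_⟩
  apply MeasureTheory.HasFiniteIntegral.of_bounded (C := 1)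
  filter_upwards with U
  simp only [norm_mul, Complex.norm_conj]
  have := ent_bound U i1 j1; have := ent_bound U i3 j3
  have h0 : ∀ (a b : Fin d), 0 ≤ ‖ent U a b‖ := fun a b => norm_nonneg _
  nlinarith [h0 i1 j1, h0 i3 j3]

/-- generic "kill" lemma from left invariance -/
lemma kill_left [μ.IsMulLeftInvariant] {f : Matrix.unitaryGroup (Fin d) ℂ → ℂ}
    (V : Matrix.unitaryGroup (Fin d) ℂ) (c : ℂ) (hc : c ≠ 1)
    (h : ∀ U, f (V * U) = c * f U) : ∫ U, f U ∂μ = 0 := by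
  have h1 : ∫ U, f U ∂μ = c * ∫ U, f U ∂μ := by
    conv_lhs => rw [← integral_mul_left_eq_self f V]
    simp_rw [h]
    rw [← smul_eq_mul, ← integral_smul]
    simp [smul_eq_mul]
  have h2 : (1 - c) * ∫ U, f U ∂μ = 0 := by linear_combination h1
  rcases mul_eq_zero.mp h2 with h3 | h3
  · exact absurd (by linear_combination -h3) hc
  · exact h3

lemma kill_right [μ.IsMulRightInvariant] {f : Matrix.unitaryGroup (Fin d) ℂ → ℂ}
    (V : Matrix.unitaryGroup (Fin d) ℂ) (c : ℂ) (hc : c ≠ 1)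
    (h : ∀ U, f (U * V) = c * f U) : ∫ U, f U ∂μ = 0 := by
  have h1 : ∫ U, f U ∂μ = c * ∫ U, f U ∂μ := by
    conv_lhs => rw [← integral_mul_right_eq_self f V]
    simp_rw [h]
    rw [← smul_eq_mul, ← integral_smul]
    simp [smul_eq_mul]
  have h2 : (1 - c) * ∫ U, f U ∂μ = 0 := by linear_combination h1
  rcases mul_eq_zero.mp h2 with h3 | h3
  · exact absurd (by linear_combination -h3) hc
  · exact h3

section Special
variable {d : ℕ}

/-- diagonal phase unitary: I at position p, 1 elsewhere -/
def phase (p : Fin d) : Matrix.unitaryGroup (Fin d) ℂ :=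
  ⟨Matrix.diagonal (fun q => if q = p then Complex.I else 1), by
    rw [Matrix.mem_unitaryGroup_iff, Matrix.star_eq_conjTranspose, Matrix.diagonal_conjTranspose]
    rw [Matrix.diagonal_mul_diagonal]
    ext i j
    rcases eq_or_ne i j with rfl | hij
    · by_cases h : i = p <;>
        simp [Matrix.diagonal_apply_eq, h, Pi.star_apply, Complex.conj_I, Complex.I_mul_I]
    · simp [Matrix.diagonal_apply_ne _ hij, Matrix.one_apply_ne hij]⟩

lemma ent_phase (p i k : Fin d) :
    ent (phase p) i k = if i = k then (if i = p then Complex.I else 1) else 0 :=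
  Matrix.diagonal_apply _ i k

lemma ent_phase_mul (p : Fin d) (U : Matrix.unitaryGroup (Fin d) ℂ) (i j : Fin d) :
    ent (phase p * U) i j = (if i = p then Complex.I else 1) * ent U i j := by
  rw [ent_mul]
  simp_rw [ent_phase, ite_mul, zero_mul]
  rw [Finset.sum_ite_eq Finset.univ i]
  simp

lemma ent_mul_phase (p : Fin d) (U : Matrix.unitaryGroup (Fin d) ℂ) (i j : Fin d) :
    ent (U * phase p) i j = ent U i j * (if j = p then Complex.I else 1) := by
  rw [ent_mul]
  have : ∀ k : Fin d, ent U i k * ent (phase p) k j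
      = if k = j then ent U i k * (if j = p then Complex.I else 1) else 0 := by
    intro k
    rw [ent_phase]
    rcases eq_or_ne k j with rfl | h
    · simp
    · simp [h]
  simp_rw [this]
  rw [Finset.sum_ite_eq' Finset.univ j]
  simp

/-- permutation unitary -/
def permU (σ : Equiv.Perm (Fin d)) : Matrix.unitaryGroup (Fin d) ℂ :=
  ⟨Matrix.of (fun i j => if σ j = i then 1 else 0), by
    rw [Matrix.mem_unitaryGroup_iff, Matrix.star_eq_conjTranspose]
    ext i j
    simp only [Matrix.mul_apply, Matrix.conjTranspose_apply, Matrix.of_apply]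
    have : ∀ k : Fin d, (if σ k = i then (1:ℂ) else 0) * star (if σ k = j then (1:ℂ) else 0)
        = if k = σ⁻¹ i then (if σ k = j then 1 else 0) else 0 := by
      intro k
      by_cases h : σ k = i
      · have : k = σ⁻¹ i := by simp [← h]
        by_cases h2 : σ k = j <;> simp [h, h2, this]
      · have : ¬ (k = σ⁻¹ i) := by
          intro hk; exact h (by simp [hk])
        rw [if_neg h, if_neg this]; simp
    simp_rw [this]
    rw [Finset.sum_ite_eq' Finset.univ (σ⁻¹ i)]
    simp [Matrix.one_apply, eq_comm]⟩

lemma ent_permU (σ : Equiv.Perm (Fin d)) (i k : Fin d) :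
    ent (permU σ) i k = if σ k = i then 1 else 0 := rfl

lemma ent_permU_mul (σ : Equiv.Perm (Fin d)) (U : Matrix.unitaryGroup (Fin d) ℂ) (i j : Fin d) :
    ent (permU σ * U) i j = ent U (σ⁻¹ i) j := by
  rw [ent_mul]
  have : ∀ k : Fin d, ent (permU σ) i k * ent U k j
      = if k = σ⁻¹ i then ent U k j else 0 := by
    intro k
    rw [ent_permU]
    by_cases h : σ k = i
    · have hk : k = σ⁻¹ i := by simp [← h]
      simp [h, hk]
    · have hk : ¬ (k = σ⁻¹ i) := fun hk => h (by simp [hk])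
      rw [if_neg h, if_neg hk]; simp
  simp_rw [this]
  rw [Finset.sum_ite_eq' Finset.univ (σ⁻¹ i)]
  simp

lemma ent_mul_permU (σ : Equiv.Perm (Fin d)) (U : Matrix.unitaryGroup (Fin d) ℂ) (i j : Fin d) :
    ent (U * permU σ) i j = ent U i (σ j) := by
  rw [ent_mul]
  have : ∀ k : Fin d, ent U i k * ent (permU σ) k j
      = if k = σ j then ent U i k else 0 := by
    intro k
    rw [ent_permU]
    by_cases h : σ j = k
    · rw [if_pos h, if_pos h.symm, mul_one]
    · rw [if_neg h, if_neg (fun hk : k = σ j => h hk.symm), mul_zero]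
  simp_rw [this]
  rw [Finset.sum_ite_eq' Finset.univ (σ j)]
  simp

end Special

section Moments
variable {d : ℕ} (μ : Measure (Matrix.unitaryGroup (Fin d) ℂ))
  [IsProbabilityMeasure μ] [μ.IsMulLeftInvariant] [μ.IsMulRightInvariant]

/-- degree-(2,2) monomial integral -/
noncomputable def m4 (i1 j1 i2 j2 i3 j3 i4 j4 : Fin d) : ℂ :=
  ∫ U, ent U i1 j1 * ent U i2 j2 * conj (ent U i3 j3) * conj (ent U i4 j4) ∂μ

noncomputable def m2 (i1 j1 i3 j3 : Fin d) : ℂ :=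
  ∫ U, ent U i1 j1 * conj (ent U i3 j3) ∂μ

lemma integral_conj_invariant (f : Matrix.unitaryGroup (Fin d) ℂ → ℂ)
    (P Q : Matrix.unitaryGroup (Fin d) ℂ) :
    ∫ U, f (P * (U * Q)) ∂μ = ∫ U, f U ∂μ := by
  rw [integral_mul_right_eq_self (fun V => f (P * V)) Q,
    integral_mul_left_eq_self f P]

lemma m4_perm (σ τ : Equiv.Perm (Fin d)) (i1 j1 i2 j2 i3 j3 i4 j4 : Fin d) :
    m4 μ (σ i1) (τ j1) (σ i2) (τ j2) (σ i3) (τ j3) (σ i4) (τ j4)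
      = m4 μ i1 j1 i2 j2 i3 j3 i4 j4 := by
  unfold m4
  rw [← integral_conj_invariant μ
    (fun U => ent U i1 j1 * ent U i2 j2 * conj (ent U i3 j3) * conj (ent U i4 j4))
    (permU σ⁻¹) (permU τ)]
  congr 1
  funext U
  simp only [ent_permU_mul, ent_mul_permU, inv_inv]

lemma m2_perm (σ τ : Equiv.Perm (Fin d)) (i1 j1 i3 j3 : Fin d) :
    m2 μ (σ i1) (τ j1) (σ i3) (τ j3) = m2 μ i1 j1 i3 j3 := by
  unfold m2
  rw [← integral_conj_invariant μ
    (fun U => ent U i1 j1 * conj (ent U i3 j3)) (permU σ⁻¹) (permU τ)]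
  congr 1
  funext U
  simp only [ent_permU_mul, ent_mul_permU, inv_inv]

lemma conj_phase_factor (k p : Fin d) :
    conj (if k = p then Complex.I else 1) = (if k = p then -Complex.I else 1) := by
  split <;> simp [Complex.conj_I]

/-- kill by left phases: row-count imbalance -/
lemma m4_kill_left (p : Fin d) (i1 j1 i2 j2 i3 j3 i4 j4 : Fin d)
    (hc : ((if i1 = p then 1 else 0) + (if i2 = p then 1 else 0) : ℤ)
        ≠ (if i3 = p then 1 else 0) + (if i4 = p then 1 else 0)) :
    m4 μ i1 j1 i2 j2 i3 j3 i4 j4 = 0 := by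
  apply kill_left μ (phase p)
    ((if i1 = p then Complex.I else 1) * (if i2 = p then Complex.I else 1)
      * (if i3 = p then -Complex.I else 1) * (if i4 = p then -Complex.I else 1))
  · by_cases h1 : i1 = p <;> by_cases h2 : i2 = p <;> by_cases h3 : i3 = p <;>
      by_cases h4 : i4 = p <;>
      simp only [h1, h2, h3, h4, if_true, if_false, if_pos, if_neg] at hc ⊢ <;>
      first
        | (exfalso; omega)
        | (intro heq; rw [Complex.ext_iff] at heq; simp at heq <;> norm_num at heq)
  · intro U
    simp only [ent_phase_mul, _root_.map_mul, conj_phase_factor]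
    ring

/-- kill by right phases: column-count imbalance -/
lemma m4_kill_right (p : Fin d) (i1 j1 i2 j2 i3 j3 i4 j4 : Fin d)
    (hc : ((if j1 = p then 1 else 0) + (if j2 = p then 1 else 0) : ℤ)
        ≠ (if j3 = p then 1 else 0) + (if j4 = p then 1 else 0)) :
    m4 μ i1 j1 i2 j2 i3 j3 i4 j4 = 0 := by
  apply kill_right μ (phase p)
    ((if j1 = p then Complex.I else 1) * (if j2 = p then Complex.I else 1)
      * (if j3 = p then -Complex.I else 1) * (if j4 = p then -Complex.I else 1))
  · by_cases h1 : j1 = p <;> by_cases h2 : j2 = p <;> by_cases h3 : j3 = p <;>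
      by_cases h4 : j4 = p <;>
      simp only [h1, h2, h3, h4, if_true, if_false, if_pos, if_neg] at hc ⊢ <;>
      first
        | (exfalso; omega)
        | (intro heq; rw [Complex.ext_iff] at heq; simp at heq <;> norm_num at heq)
  · intro U
    simp only [ent_mul_phase, _root_.map_mul, conj_phase_factor]
    ring

/-- counting lemma: equal counts at every point forces pair equality -/
lemma pair_eq_of_counts (i j k l : Fin d)
    (hc : ∀ p : Fin d, ((if i = p then 1 else 0) + (if j = p then 1 else 0) : ℤ)
        = (if k = p then 1 else 0) + (if l = p then 1 else 0)) :
    (k = i ∧ l = j) ∨ (k = j ∧ l = i) := by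
  have hi := hc i
  have hj := hc j
  by_cases hji : j = i
  · subst hji
    by_cases hki : k = j <;> by_cases hli : l = j <;>
      simp [hki, hli] at hi ⊢ <;> tauto
  · by_cases hki : k = i
    · left
      refine ⟨hki, ?_⟩
      by_cases hlj : l = j
      · exact hlj
      · exfalso
        have hij : ¬ i = j := fun h => hji h.symm
        have hkj : ¬ k = j := by rw [hki]; exact hij
        simp [hij, hkj, hlj] at hj
    · by_cases hli : l = i
      · right
        refine ⟨?_, hli⟩
        by_cases hkj : k = j
        · exact hkj
        · exfalso
          have hij : ¬ i = j := fun h => hji h.symm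
          have hlj : ¬ l = j := by rw [hli]; exact hij
          simp [hij, hkj, hlj] at hj
      · exfalso
        simp [hji, hki, hli] at hi
end Moments

section Rotation
variable {d : ℕ}

lemma sum_split_two (a b : Fin d) (hab : a ≠ b) (f : Fin d → ℂ)
    (hf : ∀ k, k ≠ a → k ≠ b → f k = 0) : ∑ k, f k = f a + f b := by
  rw [← Finset.sum_subset (Finset.subset_univ {a, b})
    (fun x _ hx => hf x (fun h => hx (by simp [h])) (fun h => hx (by simp [h])))]
  rw [Finset.sum_pair hab]

/-- rotation matrix in the (a,b) plane with cos = 3/5, sin = 4/5 -/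
noncomputable def rotM (a b : Fin d) : Matrix (Fin d) (Fin d) ℂ := Matrix.of fun i j =>
  if i = a then (if j = a then ((3/5 : ℝ) : ℂ) else if j = b then ((-(4/5) : ℝ) : ℂ) else 0)
  else if i = b then (if j = a then ((4/5 : ℝ) : ℂ) else if j = b then ((3/5 : ℝ) : ℂ) else 0)
  else if i = j then 1 else 0

lemma rotM_unitary (a b : Fin d) (hab : a ≠ b) : rotM a b ∈ Matrix.unitaryGroup (Fin d) ℂ := by
  rw [Matrix.mem_unitaryGroup_iff, Matrix.star_eq_conjTranspose]
  ext i j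
  simp only [Matrix.mul_apply, Matrix.conjTranspose_apply, rotM, Matrix.of_apply]
  by_cases hia : i = a
  · rw [sum_split_two a b hab _ (fun k hk1 hk2 => by simp [hia, hk1, hk2])]
    by_cases hja : j = a
    · simp only [hia, hja, if_true, if_pos rfl, if_neg hab, if_neg (Ne.symm hab),
        Matrix.one_apply, Complex.star_def, Complex.conj_ofReal]
      push_cast
      norm_num
    · by_cases hjb : j = b
      · simp only [hia, hjb, if_true, if_pos rfl, if_neg hab, if_neg (Ne.symm hab), if_neg hja,
          if_neg (show ¬ b = a from Ne.symm hab), Matrix.one_apply, Complex.star_def,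
          Complex.conj_ofReal, if_neg (show ¬ a = b from hab)]
        push_cast
        ring
      · simp only [hia, if_true, if_pos rfl, if_neg hja, if_neg hjb, if_neg hab,
          if_neg (Ne.symm hab), Matrix.one_apply,
          if_neg (show ¬ a = j from fun h => hja h.symm)]
        simp [hja, hjb]
  · by_cases hib : i = b
    · rw [sum_split_two a b hab _ (fun k hk1 hk2 => by simp [hia, hib, hk1, hk2])]
      by_cases hja : j = a
      · simp only [hia, hib, hja, if_true, if_pos rfl, if_neg hab, if_neg (Ne.symm hab),
          if_neg (show ¬ b = a from Ne.symm hab), Matrix.one_apply, Complex.star_def,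
          Complex.conj_ofReal]
        push_cast
        ring
      · by_cases hjb : j = b
        · simp only [hia, hib, hjb, if_true, if_pos rfl, if_neg hab, if_neg (Ne.symm hab),
            if_neg (show ¬ b = a from Ne.symm hab), Matrix.one_apply, Complex.star_def,
            Complex.conj_ofReal]
          push_cast
          norm_num
        · simp only [hia, hib, if_true, if_pos rfl, if_neg hja, if_neg hjb,
            if_neg (show ¬ b = a from Ne.symm hab), Matrix.one_apply,
            if_neg (show ¬ b = j from fun h => hjb h.symm)]
          simp [hja, hjb]
    · have hsum : ∀ k : Fin d,
          (if i = a then (if k = a then ((3/5 : ℝ) : ℂ) else if k = b then ((-(4/5) : ℝ) : ℂ) else 0)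
            else if i = b then (if k = a then ((4/5 : ℝ) : ℂ) else if k = b then ((3/5 : ℝ) : ℂ) else 0)
            else if i = k then 1 else 0)
          * star (if j = a then (if k = a then ((3/5 : ℝ) : ℂ) else if k = b then ((-(4/5) : ℝ) : ℂ) else 0)
            else if j = b then (if k = a then ((4/5 : ℝ) : ℂ) else if k = b then ((3/5 : ℝ) : ℂ) else 0)
            else if j = k then 1 else 0)
          = if k = i then star (if j = a then (if i = a then ((3/5 : ℝ) : ℂ) else if i = b then ((-(4/5) : ℝ) : ℂ) else 0)
            else if j = b then (if i = a then ((4/5 : ℝ) : ℂ) else if i = b then ((3/5 : ℝ) : ℂ) else 0)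
            else if j = i then 1 else 0) else 0 := by
        intro k
        rcases eq_or_ne k i with rfl | hk
        · rw [if_pos rfl, if_neg hia, if_neg hib, if_pos rfl, one_mul]
        · rw [if_neg hk, if_neg hia, if_neg hib,
            if_neg (fun h : i = k => hk h.symm), zero_mul]
      simp_rw [hsum]
      rw [Finset.sum_ite_eq' Finset.univ i]
      simp only [Finset.mem_univ, if_pos, if_neg hia, if_neg hib, Matrix.one_apply]
      by_cases hja : j = a
      · rw [if_pos hja, star_zero, if_neg (fun h : i = j => hia (h.trans hja))]
      · by_cases hjb : j = b
        · rw [if_neg hja, if_pos hjb, star_zero, if_neg (fun h : i = j => hib (h.trans hjb))]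
        · rcases eq_or_ne j i with rfl | hji
          · simp [hja, hjb]
          · rw [if_neg hja, if_neg hjb, if_neg hji, star_zero,
              if_neg (fun h : i = j => hji h.symm)]

noncomputable def rotU (a b : Fin d) (hab : a ≠ b) : Matrix.unitaryGroup (Fin d) ℂ :=
  ⟨rotM a b, rotM_unitary a b hab⟩

lemma ent_mul_rot (a b : Fin d) (hab : a ≠ b) (U : Matrix.unitaryGroup (Fin d) ℂ) (i : Fin d) :
    ent (U * rotU a b hab) i a
      = ((3/5 : ℝ) : ℂ) * ent U i a + ((4/5 : ℝ) : ℂ) * ent U i b := by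
  rw [ent_mul]
  have hent : ∀ k, ent (rotU a b hab) k a
      = if k = a then ((3/5 : ℝ) : ℂ) else if k = b then ((4/5 : ℝ) : ℂ) else 0 := by
    intro k
    show rotM a b k a = _
    rcases eq_or_ne k a with rfl | hka
    · simp [rotM]
    · rcases eq_or_ne k b with rfl | hkb
      · simp [rotM, Ne.symm hab, hka]
      · simp [rotM, hka, hkb, Ne.symm hka]
  simp_rw [hent]
  rw [sum_split_two a b hab _ (fun k hk1 hk2 => by simp [hk1, hk2])]
  simp [hab, Ne.symm hab]
  ring

lemma ent_rot_mul (a b : Fin d) (hab : a ≠ b) (U : Matrix.unitaryGroup (Fin d) ℂ) (j : Fin d) :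
    ent (rotU a b hab * U) a j
      = ((3/5 : ℝ) : ℂ) * ent U a j - ((4/5 : ℝ) : ℂ) * ent U b j := by
  rw [ent_mul]
  have hent : ∀ k, ent (rotU a b hab) a k
      = if k = a then ((3/5 : ℝ) : ℂ) else if k = b then ((-(4/5) : ℝ) : ℂ) else 0 := by
    intro k
    show rotM a b a k = _
    simp [rotM]
  simp_rw [hent]
  rw [sum_split_two a b hab _ (fun k hk1 hk2 => by simp [hk1, hk2])]
  simp [hab, Ne.symm hab]
  push_cast
  ring

end Rotation

section Equations
variable {d : ℕ} (μ : Measure (Matrix.unitaryGroup (Fin d) ℂ))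
  [IsProbabilityMeasure μ] [μ.IsMulLeftInvariant] [μ.IsMulRightInvariant]

lemma integral_cmul (c : ℂ) (f : Matrix.unitaryGroup (Fin d) ℂ → ℂ) :
    ∫ U, c * f U ∂μ = c * ∫ U, f U ∂μ := by
  simpa [smul_eq_mul] using integral_smul c f

lemma m4_swap12 (i1 j1 i2 j2 i3 j3 i4 j4 : Fin d) :
    m4 μ i1 j1 i2 j2 i3 j3 i4 j4 = m4 μ i2 j2 i1 j1 i3 j3 i4 j4 := by
  unfold m4; congr 1; funext U; ring

lemma m4_swap34 (i1 j1 i2 j2 i3 j3 i4 j4 : Fin d) :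
    m4 μ i1 j1 i2 j2 i3 j3 i4 j4 = m4 μ i1 j1 i2 j2 i4 j4 i3 j3 := by
  unfold m4; congr 1; funext U; ring

lemma m4_trace_kill (i j k l : Fin d) (h : ¬((k = i ∧ l = j) ∨ (k = j ∧ l = i))) :
    m4 μ i i j j k k l l = 0 := by
  have hex : ∃ p : Fin d, ((if i = p then 1 else 0) + (if j = p then 1 else 0) : ℤ)
      ≠ (if k = p then 1 else 0) + (if l = p then 1 else 0) := by
    by_contra hall
    push_neg at hall
    exact h (pair_eq_of_counts i j k l hall)
  obtain ⟨p, hp⟩ := hex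
  exact m4_kill_left μ p i i j j k k l l hp

lemma d_mul_m2 (a : Fin d) : (d : ℂ) * m2 μ a a a a = 1 := by
  have hsum : ∑ j, m2 μ a j a j = 1 := by
    unfold m2
    rw [← integral_finset_sum _ (fun j _ => integrable_mono2 μ a j a j)]
    have : ∀ U : Matrix.unitaryGroup (Fin d) ℂ,
        ∑ j, ent U a j * conj (ent U a j) = (1 : ℂ) := fun U => row_norm U a
    simp_rw [this]
    simp
  have heq : ∀ j : Fin d, m2 μ a j a j = m2 μ a a a a := by
    intro j
    have h := m2_perm μ (Equiv.refl (Fin d)) (Equiv.swap a j) a a a a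
    simpa [Equiv.swap_apply_left] using h
  rw [Finset.sum_congr rfl (fun j _ => heq j), Finset.sum_const, Finset.card_univ,
    Fintype.card_fin, nsmul_eq_mul] at hsum
  exact hsum

/-- Bc + (d-1) C = e -/
lemma eq_col (a b : Fin d) (hab : a ≠ b) :
    m4 μ b a a a b a a a + ((d : ℂ) - 1) * m4 μ b b a a b b a a = m2 μ a a a a := by
  have key : ∑ l, m4 μ b l a a b l a a = m2 μ a a a a := by
    unfold m4 m2
    rw [← integral_finset_sum _ (fun l _ => integrable_mono4 μ b l a a b l a a)]
    congr 1
    funext U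
    calc ∑ l, ent U b l * ent U a a * conj (ent U b l) * conj (ent U a a)
        = (∑ l, ent U b l * conj (ent U b l)) * (ent U a a * conj (ent U a a)) := by
          rw [Finset.sum_mul]
          exact Finset.sum_congr rfl fun l _ => by ring
      _ = ent U a a * conj (ent U a a) := by rw [row_norm]; ring
  rw [← Finset.add_sum_erase Finset.univ _ (Finset.mem_univ a)] at key
  have hconst : ∀ l ∈ Finset.univ.erase a, m4 μ b l a a b l a a = m4 μ b b a a b b a a := by
    intro l hl
    have hla : l ≠ a := Finset.ne_of_mem_erase hl
    have h := m4_perm μ (Equiv.refl (Fin d)) (Equiv.swap b l) b b a a b b a a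
    simpa [Equiv.swap_apply_left,
      Equiv.swap_apply_of_ne_of_ne hab (Ne.symm hla)] using h
  rw [Finset.sum_congr rfl hconst, Finset.sum_const,
    Finset.card_erase_of_mem (Finset.mem_univ a), Finset.card_univ, Fintype.card_fin,
    nsmul_eq_mul] at key
  have hd1 : ((d - 1 : ℕ) : ℂ) = (d : ℂ) - 1 := by
    have : 1 ≤ d := Nat.one_le_iff_ne_zero.mpr (by rintro rfl; exact absurd a.2 (by omega))
    push_cast [this]
    ring
  rw [hd1] at key
  exact key

lemma integral_add9 {G' : Type*} [MeasurableSpace G'] (μ' : Measure G')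
    (g1 g2 g3 g4 g5 g6 g7 g8 g9 : G' → ℂ)
    (h1 : Integrable g1 μ') (h2 : Integrable g2 μ') (h3 : Integrable g3 μ')
    (h4 : Integrable g4 μ') (h5 : Integrable g5 μ') (h6 : Integrable g6 μ')
    (h7 : Integrable g7 μ') (h8 : Integrable g8 μ') (h9 : Integrable g9 μ') :
    ∫ U, (g1 U + g2 U + g3 U + g4 U + g5 U + g6 U + g7 U + g8 U + g9 U) ∂μ'
      = (∫ U, g1 U ∂μ') + (∫ U, g2 U ∂μ') + (∫ U, g3 U ∂μ') + (∫ U, g4 U ∂μ')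
        + (∫ U, g5 U ∂μ') + (∫ U, g6 U ∂μ') + (∫ U, g7 U ∂μ') + (∫ U, g8 U ∂μ')
        + (∫ U, g9 U ∂μ') := by
  have i2 : Integrable (fun U => g1 U + g2 U) μ' := h1.add h2
  have i3 : Integrable (fun U => g1 U + g2 U + g3 U) μ' := i2.add h3
  have i4 : Integrable (fun U => g1 U + g2 U + g3 U + g4 U) μ' := i3.add h4
  have i5 : Integrable (fun U => g1 U + g2 U + g3 U + g4 U + g5 U) μ' := i4.add h5
  have i6 : Integrable (fun U => g1 U + g2 U + g3 U + g4 U + g5 U + g6 U) μ' := i5.add h6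
  have i7 : Integrable (fun U => g1 U + g2 U + g3 U + g4 U + g5 U + g6 U + g7 U) μ' := i6.add h7
  have i8 : Integrable (fun U => g1 U + g2 U + g3 U + g4 U + g5 U + g6 U + g7 U + g8 U) μ' :=
    i7.add h8
  rw [integral_add i8 h9, integral_add i7 h8, integral_add i6 h7, integral_add i5 h6,
    integral_add i4 h5, integral_add i3 h4, integral_add i2 h3, integral_add h1 h2]

/-- column rotation: A = 2 B -/
lemma rot_eq_col (a b : Fin d) (hab : a ≠ b) :
    m4 μ a a a a a a a a = 2 * m4 μ a a a b a a a b := by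
  have h0 : ∫ U, (fun U => ent U a a * ent U a a * conj (ent U a a) * conj (ent U a a))
      (U * rotU a b hab) ∂μ
      = ∫ U, ent U a a * ent U a a * conj (ent U a a) * conj (ent U a a) ∂μ :=
    integral_mul_right_eq_self
      (fun U => ent U a a * ent U a a * conj (ent U a a) * conj (ent U a a)) (rotU a b hab)
  have hexp : (fun U : Matrix.unitaryGroup (Fin d) ℂ =>
      (fun U => ent U a a * ent U a a * conj (ent U a a) * conj (ent U a a)) (U * rotU a b hab))
      = fun U =>
        ((3/5 : ℝ) : ℂ)^4 * (ent U a a * ent U a a * conj (ent U a a) * conj (ent U a a))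
        + ((4/5 : ℝ) : ℂ)^4 * (ent U a b * ent U a b * conj (ent U a b) * conj (ent U a b))
        + ((3/5 : ℝ) : ℂ)^2*((4/5 : ℝ) : ℂ)^2
            * (ent U a a * ent U a a * conj (ent U a b) * conj (ent U a b))
        + ((3/5 : ℝ) : ℂ)^2*((4/5 : ℝ) : ℂ)^2
            * (ent U a b * ent U a b * conj (ent U a a) * conj (ent U a a))
        + 4*((3/5 : ℝ) : ℂ)^2*((4/5 : ℝ) : ℂ)^2
            * (ent U a a * ent U a b * conj (ent U a a) * conj (ent U a b))
        + 2*((3/5 : ℝ) : ℂ)^3*((4/5 : ℝ) : ℂ)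
            * (ent U a a * ent U a a * conj (ent U a a) * conj (ent U a b))
        + 2*((3/5 : ℝ) : ℂ)^3*((4/5 : ℝ) : ℂ)
            * (ent U a a * ent U a b * conj (ent U a a) * conj (ent U a a))
        + 2*((3/5 : ℝ) : ℂ)*((4/5 : ℝ) : ℂ)^3
            * (ent U a b * ent U a b * conj (ent U a a) * conj (ent U a b))
        + 2*((3/5 : ℝ) : ℂ)*((4/5 : ℝ) : ℂ)^3
            * (ent U a a * ent U a b * conj (ent U a b) * conj (ent U a b)) := by
    funext U
    simp only [ent_mul_rot, map_add, _root_.map_mul, Complex.conj_ofReal]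
    ring
  rw [hexp] at h0
  have I4 := fun (j1 j2 j3 j4 : Fin d) => integrable_mono4 μ a j1 a j2 a j3 a j4
  rw [integral_add9 μ _ _ _ _ _ _ _ _ _
    ((I4 a a a a).const_mul _) ((I4 b b b b).const_mul _) ((I4 a a b b).const_mul _)
    ((I4 b b a a).const_mul _) ((I4 a b a b).const_mul _) ((I4 a a a b).const_mul _)
    ((I4 a b a a).const_mul _) ((I4 b b a b).const_mul _) ((I4 a b b b).const_mul _)] at h0
  simp only [integral_cmul] at h0
  have hg2 : (∫ U, ent U a b * ent U a b * conj (ent U a b) * conj (ent U a b) ∂μ)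
      = ∫ U, ent U a a * ent U a a * conj (ent U a a) * conj (ent U a a) ∂μ := by
    have h := m4_perm μ (Equiv.refl (Fin d)) (Equiv.swap a b) a a a a a a a a
    simpa [Equiv.swap_apply_left, m4] using h
  have hz : ∀ (j1 j2 j3 j4 : Fin d),
      ((if j1 = a then 1 else 0) + (if j2 = a then 1 else 0) : ℤ)
        ≠ (if j3 = a then 1 else 0) + (if j4 = a then 1 else 0) →
      (∫ U, ent U a j1 * ent U a j2 * conj (ent U a j3) * conj (ent U a j4) ∂μ) = 0 := by
    intro j1 j2 j3 j4 hcc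
    exact m4_kill_right μ a a j1 a j2 a j3 a j4 hcc
  rw [hg2,
    hz a a b b (by simp [hab, Ne.symm hab]),
    hz b b a a (by simp [hab, Ne.symm hab]),
    hz a a a b (by simp [hab, Ne.symm hab]),
    hz a b a a (by simp [hab, Ne.symm hab]),
    hz b b a b (by simp [hab, Ne.symm hab]),
    hz a b b b (by simp [hab, Ne.symm hab])] at h0
  have hc5 : ((3/5 : ℝ) : ℂ) = 3/5 := by push_cast; norm_num
  have hs5 : ((4/5 : ℝ) : ℂ) = 4/5 := by push_cast; norm_num
  rw [hc5, hs5] at h0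
  show (∫ U, ent U a a * ent U a a * conj (ent U a a) * conj (ent U a a) ∂μ)
    = 2 * ∫ U, ent U a a * ent U a b * conj (ent U a a) * conj (ent U a b) ∂μ
  linear_combination (-625/288 : ℂ) * h0

/-- row rotation: A = 2 Bc -/
lemma rot_eq_row (a b : Fin d) (hab : a ≠ b) :
    m4 μ a a a a a a a a = 2 * m4 μ a a b a a a b a := by
  have h0 : ∫ U, (fun U => ent U a a * ent U a a * conj (ent U a a) * conj (ent U a a))
      (rotU a b hab * U) ∂μ
      = ∫ U, ent U a a * ent U a a * conj (ent U a a) * conj (ent U a a) ∂μ :=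
    integral_mul_left_eq_self
      (fun U => ent U a a * ent U a a * conj (ent U a a) * conj (ent U a a)) (rotU a b hab)
  have hexp : (fun U : Matrix.unitaryGroup (Fin d) ℂ =>
      (fun U => ent U a a * ent U a a * conj (ent U a a) * conj (ent U a a)) (rotU a b hab * U))
      = fun U =>
        ((3/5 : ℝ) : ℂ)^4 * (ent U a a * ent U a a * conj (ent U a a) * conj (ent U a a))
        + ((4/5 : ℝ) : ℂ)^4 * (ent U b a * ent U b a * conj (ent U b a) * conj (ent U b a))
        + ((3/5 : ℝ) : ℂ)^2*((4/5 : ℝ) : ℂ)^2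
            * (ent U a a * ent U a a * conj (ent U b a) * conj (ent U b a))
        + ((3/5 : ℝ) : ℂ)^2*((4/5 : ℝ) : ℂ)^2
            * (ent U b a * ent U b a * conj (ent U a a) * conj (ent U a a))
        + 4*((3/5 : ℝ) : ℂ)^2*((4/5 : ℝ) : ℂ)^2
            * (ent U a a * ent U b a * conj (ent U a a) * conj (ent U b a))
        + (-2)*((3/5 : ℝ) : ℂ)^3*((4/5 : ℝ) : ℂ)
            * (ent U a a * ent U a a * conj (ent U a a) * conj (ent U b a))
        + (-2)*((3/5 : ℝ) : ℂ)^3*((4/5 : ℝ) : ℂ)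
            * (ent U a a * ent U b a * conj (ent U a a) * conj (ent U a a))
        + (-2)*((3/5 : ℝ) : ℂ)*((4/5 : ℝ) : ℂ)^3
            * (ent U b a * ent U b a * conj (ent U a a) * conj (ent U b a))
        + (-2)*((3/5 : ℝ) : ℂ)*((4/5 : ℝ) : ℂ)^3
            * (ent U a a * ent U b a * conj (ent U b a) * conj (ent U b a)) := by
    funext U
    simp only [ent_rot_mul, map_sub, _root_.map_mul, Complex.conj_ofReal]
    ring
  rw [hexp] at h0
  have I4 := fun (i1 i2 i3 i4 : Fin d) => integrable_mono4 μ i1 a i2 a i3 a i4 a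
  rw [integral_add9 μ _ _ _ _ _ _ _ _ _
    ((I4 a a a a).const_mul _) ((I4 b b b b).const_mul _) ((I4 a a b b).const_mul _)
    ((I4 b b a a).const_mul _) ((I4 a b a b).const_mul _) ((I4 a a a b).const_mul _)
    ((I4 a b a a).const_mul _) ((I4 b b a b).const_mul _) ((I4 a b b b).const_mul _)] at h0
  simp only [integral_cmul] at h0
  have hg2 : (∫ U, ent U b a * ent U b a * conj (ent U b a) * conj (ent U b a) ∂μ)
      = ∫ U, ent U a a * ent U a a * conj (ent U a a) * conj (ent U a a) ∂μ := by
    have h := m4_perm μ (Equiv.swap a b) (Equiv.refl (Fin d)) a a a a a a a a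
    simpa [Equiv.swap_apply_left, m4] using h
  have hz : ∀ (i1 i2 i3 i4 : Fin d),
      ((if i1 = a then 1 else 0) + (if i2 = a then 1 else 0) : ℤ)
        ≠ (if i3 = a then 1 else 0) + (if i4 = a then 1 else 0) →
      (∫ U, ent U i1 a * ent U i2 a * conj (ent U i3 a) * conj (ent U i4 a) ∂μ) = 0 := by
    intro i1 i2 i3 i4 hcc
    exact m4_kill_left μ a i1 a i2 a i3 a i4 a hcc
  rw [hg2,
    hz a a b b (by simp [hab, Ne.symm hab]),
    hz b b a a (by simp [hab, Ne.symm hab]),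
    hz a a a b (by simp [hab, Ne.symm hab]),
    hz a b a a (by simp [hab, Ne.symm hab]),
    hz b b a b (by simp [hab, Ne.symm hab]),
    hz a b b b (by simp [hab, Ne.symm hab])] at h0
  have hc5 : ((3/5 : ℝ) : ℂ) = 3/5 := by push_cast; norm_num
  have hs5 : ((4/5 : ℝ) : ℂ) = 4/5 := by push_cast; norm_num
  rw [hc5, hs5] at h0
  show (∫ U, ent U a a * ent U a a * conj (ent U a a) * conj (ent U a a) ∂μ)
    = 2 * ∫ U, ent U a a * ent U b a * conj (ent U a a) * conj (ent U b a) ∂μ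
  linear_combination (-625/288 : ℂ) * h0

end Equations

section Final
variable {d : ℕ} (μ : Measure (Matrix.unitaryGroup (Fin d) ℂ))
  [IsProbabilityMeasure μ] [μ.IsMulLeftInvariant] [μ.IsMulRightInvariant]

lemma exists_perm_pair (a b i j : Fin d) (hab : a ≠ b) (hij : i ≠ j) :
    ∃ σ : Equiv.Perm (Fin d), σ a = i ∧ σ b = j := by
  refine ⟨(Equiv.swap b ((Equiv.swap a i).symm j)).trans (Equiv.swap a i), ?_, ?_⟩
  · have hne2 : a ≠ (Equiv.swap a i).symm j := by
      intro h
      apply hij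
      have := congrArg (Equiv.swap a i) h
      rw [Equiv.apply_symm_apply] at this
      rw [Equiv.swap_apply_left] at this
      exact this
    rw [Equiv.trans_apply, Equiv.swap_apply_of_ne_of_ne hab hne2, Equiv.swap_apply_left]
  · rw [Equiv.trans_apply, Equiv.swap_apply_left, Equiv.apply_symm_apply]

/-- the diagonal moment is `A` for every index -/
lemma m4_diag_eq (a i : Fin d) :
    m4 μ i i i i i i i i = m4 μ a a a a a a a a := by
  have h := m4_perm μ (Equiv.swap a i) (Equiv.swap a i) a a a a a a a a
  simpa [Equiv.swap_apply_left] using h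

lemma m4_offdiag_eq (a b i j : Fin d) (hab : a ≠ b) (hij : i ≠ j) :
    m4 μ i i j j i i j j = m4 μ a a b b a a b b := by
  obtain ⟨σ, hσa, hσb⟩ := exists_perm_pair a b i j hab hij
  have h := m4_perm μ σ σ a a b b a a b b
  rw [hσa, hσb] at h
  exact h

/-- inner double sum reduction -/
lemma inner_sum_eq (a b : Fin d) (hab : a ≠ b) (i j : Fin d) :
    ∑ k, ∑ l, m4 μ i i j j k k l l
      = if i = j then m4 μ a a a a a a a a else 2 * m4 μ a a b b a a b b := by
  by_cases hij : i = j
  · subst hij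
    rw [if_pos rfl]
    rw [Finset.sum_eq_single i]
    · rw [Finset.sum_eq_single i]
      · exact m4_diag_eq μ a i
      · intro l _ hl
        exact m4_trace_kill μ i i i l (by tauto)
      · intro h; exact absurd (Finset.mem_univ i) h
    · intro k _ hk
      exact Finset.sum_eq_zero fun l _ => m4_trace_kill μ i i k l (by tauto)
    · intro h; exact absurd (Finset.mem_univ i) h
  · rw [if_neg hij]
    rw [sum_split_two i j hij _
      (fun k hk1 hk2 => Finset.sum_eq_zero fun l _ => m4_trace_kill μ i j k l (by tauto))]
    have hfi : ∑ l, m4 μ i i j j i i l l = m4 μ i i j j i i j j := by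
      rw [Finset.sum_eq_single j]
      · intro l _ hl
        exact m4_trace_kill μ i j i l (by tauto)
      · intro h; exact absurd (Finset.mem_univ j) h
    have hfj : ∑ l, m4 μ i i j j j j l l = m4 μ i i j j j j i i := by
      rw [Finset.sum_eq_single i]
      · intro l _ hl
        exact m4_trace_kill μ i j j l (by tauto)
      · intro h; exact absurd (Finset.mem_univ i) h
    rw [hfi, hfj, m4_swap34 μ i i j j j j i i,
      m4_offdiag_eq μ a b i j hab hij]
    ring

/-- inner double sum reduction, summing the unconjugated indices -/
lemma inner_sum_eq' (a b : Fin d) (hab : a ≠ b) (k l : Fin d) :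
    ∑ j, ∑ i, m4 μ i i j j k k l l
      = if k = l then m4 μ a a a a a a a a else 2 * m4 μ a a b b a a b b := by
  by_cases hkl : k = l
  · subst hkl
    rw [if_pos rfl]
    rw [Finset.sum_eq_single k]
    · rw [Finset.sum_eq_single k]
      · exact m4_diag_eq μ a k
      · intro i _ hi
        exact m4_trace_kill μ i k k k (by tauto)
      · intro h; exact absurd (Finset.mem_univ k) h
    · intro j _ hj
      exact Finset.sum_eq_zero fun i _ => m4_trace_kill μ i j k k (by tauto)
    · intro h; exact absurd (Finset.mem_univ k) h
  · rw [if_neg hkl]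
    rw [sum_split_two k l hkl _
      (fun j hj1 hj2 => Finset.sum_eq_zero fun i _ => m4_trace_kill μ i j k l (by tauto))]
    have hfk : ∑ i, m4 μ i i k k k k l l = m4 μ l l k k k k l l := by
      rw [Finset.sum_eq_single l]
      · intro i _ hi
        exact m4_trace_kill μ i k k l (by tauto)
      · intro h; exact absurd (Finset.mem_univ l) h
    have hfl : ∑ i, m4 μ i i l l k k l l = m4 μ k k l l k k l l := by
      rw [Finset.sum_eq_single k]
      · intro i _ hi
        exact m4_trace_kill μ i l k l (by tauto)
      · intro h; exact absurd (Finset.mem_univ k) h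
    rw [hfk, hfl, m4_swap12 μ l l k k k k l l,
      m4_offdiag_eq μ a b k l hab hkl]
    ring

end Final

end FP

open FP in
/-- **The second frame potential of the Haar measure equals 2.**
Let `d ≥ 2` and let `μ` be the Haar probability measure on the unitary group `U(d)`
(a left- and right-invariant Borel probability measure).  Then
`∫_{U(d)} |tr U|⁴ dμ(U) = 2`. -/
theorem haar_frame_potential_eq_two (d : ℕ) (hd : 2 ≤ d)
    (μ : Measure (Matrix.unitaryGroup (Fin d) ℂ)) [IsProbabilityMeasure μ]
    [μ.IsMulLeftInvariant] [μ.IsMulRightInvariant] :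
    ∫ U, ‖Matrix.trace (U : Matrix (Fin d) (Fin d) ℂ)‖ ^ 4 ∂μ = 2 := by
  classical
  set a : Fin d := ⟨0, by omega⟩ with ha
  set b : Fin d := ⟨1, by omega⟩ with hb
  have hab : a ≠ b := by
    simp only [ha, hb, ne_eq, Fin.mk.injEq]
    omega
  -- the complex-valued fourth-power function
  set F : Matrix.unitaryGroup (Fin d) ℂ → ℂ := fun U =>
    Matrix.trace (U : Matrix (Fin d) (Fin d) ℂ) * Matrix.trace (U : Matrix (Fin d) (Fin d) ℂ)
      * conj (Matrix.trace (U : Matrix (Fin d) (Fin d) ℂ))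
      * conj (Matrix.trace (U : Matrix (Fin d) (Fin d) ℂ)) with hF
  have hFexp : F = fun U => ∑ l, ∑ k, ∑ j, ∑ i,
      ent U i i * ent U j j * conj (ent U k k) * conj (ent U l l) := by
    funext U
    have ht : Matrix.trace (U : Matrix (Fin d) (Fin d) ℂ) = ∑ i, ent U i i := by
      simp [Matrix.trace, Matrix.diag, ent]
    show Matrix.trace (U : Matrix (Fin d) (Fin d) ℂ) * Matrix.trace (U : Matrix (Fin d) (Fin d) ℂ)
      * conj (Matrix.trace (U : Matrix (Fin d) (Fin d) ℂ))
      * conj (Matrix.trace (U : Matrix (Fin d) (Fin d) ℂ)) = _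
    rw [ht, map_sum]
    simp only [Finset.sum_mul, Finset.mul_sum]
  have I0 : ∀ l k j i : Fin d, Integrable
      (fun U => ent U i i * ent U j j * conj (ent U k k) * conj (ent U l l)) μ :=
    fun l k j i => integrable_mono4 μ i i j j k k l l
  have I1 : ∀ l k j : Fin d, Integrable
      (fun U => ∑ i, ent U i i * ent U j j * conj (ent U k k) * conj (ent U l l)) μ :=
    fun l k j => integrable_finset_sum _ (fun i _ => I0 l k j i)
  have I2 : ∀ l k : Fin d, Integrable
      (fun U => ∑ j, ∑ i, ent U i i * ent U j j * conj (ent U k k) * conj (ent U l l)) μ :=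
    fun l k => integrable_finset_sum _ (fun j _ => I1 l k j)
  have I3 : ∀ l : Fin d, Integrable
      (fun U => ∑ k, ∑ j, ∑ i, ent U i i * ent U j j * conj (ent U k k) * conj (ent U l l)) μ :=
    fun l => integrable_finset_sum _ (fun k _ => I2 l k)
  have hFint : Integrable F μ := by
    rw [hFexp]
    exact integrable_finset_sum _ (fun i _ => I3 i)
  -- value of the complex integral
  have hTval : ∫ U, F U ∂μ = 2 := by
    have hswap : ∫ U, F U ∂μ = ∑ l, ∑ k, ∑ j, ∑ i, m4 μ i i j j k k l l := by
      rw [hFexp, integral_finset_sum _ (fun l _ => I3 l)]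
      refine Finset.sum_congr rfl fun l _ => ?_
      rw [integral_finset_sum _ (fun k _ => I2 l k)]
      refine Finset.sum_congr rfl fun k _ => ?_
      rw [integral_finset_sum _ (fun j _ => I1 l k j)]
      refine Finset.sum_congr rfl fun j _ => ?_
      rw [integral_finset_sum _ (fun i _ => I0 l k j i)]
      rfl
    rw [hswap]
    rw [Finset.sum_congr rfl (fun l _ => Finset.sum_congr rfl
      (fun k _ => inner_sum_eq' μ a b hab k l))]
    have hrow : ∀ l : Fin d, ∑ k, (if k = l then m4 μ a a a a a a a a
        else 2 * m4 μ a a b b a a b b)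
        = m4 μ a a a a a a a a + ((d:ℂ) - 1) * (2 * m4 μ a a b b a a b b) := by
      intro l
      rw [Finset.sum_congr rfl (fun k _ =>
        show (if k = l then m4 μ a a a a a a a a else 2 * m4 μ a a b b a a b b)
          = 2 * m4 μ a a b b a a b b
            + (if k = l then m4 μ a a a a a a a a - 2 * m4 μ a a b b a a b b else 0) from by
          by_cases h : k = l
          · rw [if_pos h, if_pos h]; ring
          · rw [if_neg h, if_neg h]; ring)]
      rw [Finset.sum_add_distrib, Finset.sum_const, Finset.sum_ite_eq' Finset.univ l,
        Finset.card_univ, Fintype.card_fin, nsmul_eq_mul, if_pos (Finset.mem_univ l)]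
      have hd1 : 1 ≤ d := by omega
      have : ((d:ℂ)) * (2 * m4 μ a a b b a a b b)
          + (m4 μ a a a a a a a a - 2 * m4 μ a a b b a a b b)
          = m4 μ a a a a a a a a + ((d:ℂ) - 1) * (2 * m4 μ a a b b a a b b) := by ring
      exact this
    rw [Finset.sum_congr rfl (fun l _ => hrow l), Finset.sum_const, Finset.card_univ,
      Fintype.card_fin, nsmul_eq_mul]
    -- now solve using the moment equations
    have hA2Bc := rot_eq_row μ a b hab
    have hcol := eq_col μ a b hab
    rw [m4_swap12 μ b a a a b a a a, m4_swap34 μ a a b a b a a a,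
      m4_swap12 μ b b a a b b a a, m4_swap34 μ a a b b b b a a] at hcol
    have hde := d_mul_m2 μ a
    linear_combination (d:ℂ) * hA2Bc + 2*(d:ℂ) * hcol + 2 * hde
  -- pass to real parts
  have hre : ∀ U : Matrix.unitaryGroup (Fin d) ℂ,
      (‖Matrix.trace (U : Matrix (Fin d) (Fin d) ℂ)‖) ^ 4
        = Complex.reCLM (F U) := by
    intro U
    show _ = Complex.reCLM (Matrix.trace (U : Matrix (Fin d) (Fin d) ℂ)
      * Matrix.trace (U : Matrix (Fin d) (Fin d) ℂ)
      * conj (Matrix.trace (U : Matrix (Fin d) (Fin d) ℂ))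
      * conj (Matrix.trace (U : Matrix (Fin d) (Fin d) ℂ)))
    set t := Matrix.trace (U : Matrix (Fin d) (Fin d) ℂ) with htt
    have h1 : t * t * conj t * conj t = ((‖t‖ ^ 4 : ℝ) : ℂ) := by
      rw [show t * t * conj t * conj t = (t * conj t)^2 by ring, Complex.mul_conj,
        Complex.normSq_eq_norm_sq]
      push_cast
      ring
    rw [h1]
    simp [← Complex.ofReal_pow]
  calc ∫ U, ‖Matrix.trace (U : Matrix (Fin d) (Fin d) ℂ)‖ ^ 4 ∂μ
      = ∫ U, Complex.reCLM (F U) ∂μ := by simp_rw [hre]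
    _ = Complex.reCLM (∫ U, F U ∂μ) := ContinuousLinearMap.integral_comp_comm _ hFint
    _ = 2 := by rw [hTval]; simp
end

section
/- Let d ≥ 1 and let E = {(p_i, U_i)}_{i=1}^m be a finite ensemble of unitaries: p_i ≥ 0 real numbers with Σ_i p_i = 1 and U_i ∈ U(d). Define the second-moment operators M_E = Σ_i p_i · (U_i ⊗ U_i ⊗ conj(U_i) ⊗ conj(U_i)) and M_H = ∫_{U(d)} U ⊗ U ⊗ conj(U) ⊗ conj(U) dμ(U), both d⁴×d⁴ complex matrices formed with Kronecker products and entrywise complex conjugation. Then the squared Frobenius distance equals the frame-potential difference: tr((M_E − M_H)·(M_E − M_H)ᴴ) = Σ_{i,j} p_i p_j |tr(U_iᴴ U_j)|⁴ − ∫_{U(d)} ∫_{U(d)} |tr(Uᴴ V)|⁴ dμ(U) dμ(V). -/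
open MeasureTheory Matrix
open scoped Matrix Kronecker

attribute [local instance] Matrix.normedAddCommGroup Matrix.normedSpace

/-- The second-moment operator `U ⊗ U ⊗ conj(U) ⊗ conj(U)` of a `d × d` matrix `U`,
a `d⁴ × d⁴` complex matrix formed with Kronecker products and entrywise conjugation. -/
def secondMomentOp (d : ℕ) (U : Matrix (Fin d) (Fin d) ℂ) :
    Matrix (((Fin d × Fin d) × Fin d) × Fin d) (((Fin d × Fin d) × Fin d) × Fin d) ℂ :=
  ((U ⊗ₖ U) ⊗ₖ U.map (starRingEnd ℂ)) ⊗ₖ U.map (starRingEnd ℂ)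

set_option maxRecDepth 4000
namespace FrameAux

lemma kron_ct {m n p q : Type*} (A : Matrix m n ℂ) (B : Matrix p q ℂ) :
    (A ⊗ₖ B)ᴴ = Aᴴ ⊗ₖ Bᴴ := by
  ext ⟨i, j⟩ ⟨k, l⟩
  simp [Matrix.conjTranspose_apply, Matrix.kroneckerMap_apply, star_mul']

lemma trace_map_conj {n : Type*} [Fintype n] (A : Matrix n n ℂ) :
    Matrix.trace (A.map (starRingEnd ℂ)) = (starRingEnd ℂ) (Matrix.trace A) := by
  simp [Matrix.trace, Matrix.diag, Matrix.map_apply, map_sum]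

lemma map_conj_mul_ct {d : ℕ} (U V : Matrix (Fin d) (Fin d) ℂ) :
    U.map (starRingEnd ℂ) * (V.map (starRingEnd ℂ))ᴴ = (U * Vᴴ).map (starRingEnd ℂ) := by
  ext i j
  simp only [Matrix.mul_apply, Matrix.conjTranspose_apply, Matrix.map_apply, starRingEnd_apply,
    star_sum, star_mul', star_star]

lemma key_trace {d : ℕ} (U V : Matrix (Fin d) (Fin d) ℂ) :
    Matrix.trace (secondMomentOp d U * (secondMomentOp d V)ᴴ)
      = ((‖Matrix.trace (Uᴴ * V)‖) ^ 4 : ℝ) := by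
  have habs : Matrix.trace (Uᴴ * V) = (starRingEnd ℂ) (Matrix.trace (U * Vᴴ)) := by
    rw [show Uᴴ * V = (Vᴴ * U)ᴴ by simp [Matrix.conjTranspose_mul],
      Matrix.trace_conjTranspose, Matrix.trace_mul_comm]
    rfl
  set t := Matrix.trace (U * Vᴴ) with ht
  rw [secondMomentOp, secondMomentOp, kron_ct, kron_ct, kron_ct,
    ← Matrix.mul_kronecker_mul, ← Matrix.mul_kronecker_mul, ← Matrix.mul_kronecker_mul,
    map_conj_mul_ct, Matrix.trace_kronecker, Matrix.trace_kronecker, Matrix.trace_kronecker,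
    trace_map_conj, habs]
  rw [Complex.norm_conj]
  have h1 : t * t * (starRingEnd ℂ) t * (starRingEnd ℂ) t
      = (t * (starRingEnd ℂ) t) ^ 2 := by ring
  rw [← ht, h1, Complex.mul_conj, ← Complex.sq_norm]
  push_cast
  ring


variable {d : ℕ}

local notation "Idx" => (((Fin d × Fin d) × Fin d) × Fin d)
local notation "MN" => Matrix (((Fin d × Fin d) × Fin d) × Fin d) (((Fin d × Fin d) × Fin d) × Fin d) ℂ

lemma smo_entry (U : Matrix (Fin d) (Fin d) ℂ) (a b : Idx) :
    secondMomentOp d U a b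
      = U a.1.1.1 b.1.1.1 * U a.1.1.2 b.1.1.2 * (starRingEnd ℂ) (U a.1.2 b.1.2) *
        (starRingEnd ℂ) (U a.2 b.2) := by
  obtain ⟨⟨⟨a1, a2⟩, a3⟩, a4⟩ := a
  obtain ⟨⟨⟨b1, b2⟩, b3⟩, b4⟩ := b
  simp [secondMomentOp, Matrix.kroneckerMap_apply, Matrix.map_apply]

lemma entry_abs_le (U : Matrix.unitaryGroup (Fin d) ℂ) (i j : Fin d) :
    ‖(U : Matrix (Fin d) (Fin d) ℂ) i j‖ ≤ 1 := by
  have h : star (U : Matrix (Fin d) (Fin d) ℂ) * (U : Matrix (Fin d) (Fin d) ℂ) = 1 := U.2.1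
  have h1 : ((star (U : Matrix (Fin d) (Fin d) ℂ) * (U : Matrix (Fin d) (Fin d) ℂ)) j j) = 1 := by
    rw [h]; simp [Matrix.one_apply]
  have h2 : ((∑ k, Complex.normSq ((U : Matrix (Fin d) (Fin d) ℂ) k j) : ℝ) : ℂ) = 1 := by
    rw [← h1, Matrix.star_eq_conjTranspose, Matrix.mul_apply]
    push_cast
    refine Finset.sum_congr rfl fun k _ => ?_
    rw [Matrix.conjTranspose_apply, Complex.normSq_eq_conj_mul_self]
    rfl
  have h3 : (∑ k, Complex.normSq ((U : Matrix (Fin d) (Fin d) ℂ) k j)) = 1 := by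
    exact_mod_cast h2
  have h4 : Complex.normSq ((U : Matrix (Fin d) (Fin d) ℂ) i j) ≤ 1 := by
    rw [← h3]
    exact Finset.single_le_sum (f := fun k => Complex.normSq ((U : Matrix (Fin d) (Fin d) ℂ) k j))
      (fun k _ => Complex.normSq_nonneg _) (Finset.mem_univ i)
  have h5 := Complex.sq_norm ((U : Matrix (Fin d) (Fin d) ℂ) i j)
  nlinarith [norm_nonneg ((U : Matrix (Fin d) (Fin d) ℂ) i j)]

lemma norm_smo_le (U : Matrix.unitaryGroup (Fin d) ℂ) :
    ‖secondMomentOp d (U : Matrix (Fin d) (Fin d) ℂ)‖ ≤ 1 := by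
  rw [Matrix.norm_le_iff zero_le_one]
  intro a b
  rw [smo_entry]
  simp only [norm_mul, Complex.norm_conj]
  have h := fun i j => entry_abs_le U i j
  have hn := fun i j => norm_nonneg ((U : Matrix (Fin d) (Fin d) ℂ) i j)
  exact mul_le_one₀ (mul_le_one₀ (mul_le_one₀ (h _ _) (hn _ _) (h _ _)) (hn _ _) (h _ _))
    (hn _ _) (h _ _)

lemma continuous_smo :
    Continuous (fun U : Matrix.unitaryGroup (Fin d) ℂ =>
      secondMomentOp d (U : Matrix (Fin d) (Fin d) ℂ)) := by
  have hcoe : Continuous (fun U : Matrix.unitaryGroup (Fin d) ℂ =>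
      (U : Matrix (Fin d) (Fin d) ℂ)) := continuous_subtype_val
  have hent : ∀ i j : Fin d, Continuous (fun U : Matrix.unitaryGroup (Fin d) ℂ =>
      (U : Matrix (Fin d) (Fin d) ℂ) i j) := fun i j => hcoe.matrix_elem i j
  apply continuous_matrix
  intro a b
  simp only [smo_entry]
  exact ((((hent _ _).mul (hent _ _)).mul (Complex.continuous_conj.comp (hent _ _))).mul
    (Complex.continuous_conj.comp (hent _ _)))

lemma integrable_smo (μ : Measure (Matrix.unitaryGroup (Fin d) ℂ)) [IsProbabilityMeasure μ] :
    @Integrable _ _ SeminormedAddGroup.toContinuousENorm _ _ (fun U : Matrix.unitaryGroup (Fin d) ℂ =>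
      secondMomentOp d (U : Matrix (Fin d) (Fin d) ℂ)) μ := by
  haveI : TopologicalSpace.PseudoMetrizableSpace MN :=
    inferInstanceAs (TopologicalSpace.PseudoMetrizableSpace (Idx → Idx → ℂ))
  haveI : SecondCountableTopology MN :=
    inferInstanceAs (SecondCountableTopology (Idx → Idx → ℂ))
  refine (integrable_const (1 : ℝ)).mono'
    (continuous_smo.aestronglyMeasurable) ?_
  exact Filter.Eventually.of_forall fun U => norm_smo_le U


noncomputable def traceMulCTLin (X : MN) : MN →ₗ[ℝ] ℂ where
  toFun Y := Matrix.trace (X * Yᴴ)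
  map_add' Y Z := by simp [Matrix.conjTranspose_add, Matrix.mul_add]
  map_smul' r Y := by
    simp [Matrix.conjTranspose_smul, Matrix.mul_smul, Matrix.trace_smul]

noncomputable def mulCTTraceLin (X : MN) : MN →ₗ[ℂ] ℂ where
  toFun Y := Matrix.trace (Y * Xᴴ)
  map_add' Y Z := by simp [Matrix.add_mul]
  map_smul' c Y := by simp [Matrix.smul_mul, Matrix.trace_smul, smul_eq_mul]

lemma trace_mul_ct_integral (X : MN) (μ : Measure (Matrix.unitaryGroup (Fin d) ℂ))
    [IsProbabilityMeasure μ] :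
    Matrix.trace (X * (∫ U, secondMomentOp d (U : Matrix (Fin d) (Fin d) ℂ) ∂μ)ᴴ)
      = ∫ U, Matrix.trace (X * (secondMomentOp d (U : Matrix (Fin d) (Fin d) ℂ))ᴴ) ∂μ := by
  have hL := (LinearMap.toContinuousLinearMap (traceMulCTLin X)).integral_comp_comm
    (integrable_smo μ)
  exact hL.symm

lemma trace_integral_mul_ct (X : MN) (μ : Measure (Matrix.unitaryGroup (Fin d) ℂ))
    [IsProbabilityMeasure μ] :
    Matrix.trace ((∫ U, secondMomentOp d (U : Matrix (Fin d) (Fin d) ℂ) ∂μ) * Xᴴ)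
      = ∫ U, Matrix.trace (secondMomentOp d (U : Matrix (Fin d) (Fin d) ℂ) * Xᴴ) ∂μ := by
  have hL := (LinearMap.toContinuousLinearMap (mulCTTraceLin X)).integral_comp_comm
    (integrable_smo μ)
  exact hL.symm

lemma inner_integral_const (μ : Measure (Matrix.unitaryGroup (Fin d) ℂ))
    [IsProbabilityMeasure μ] [μ.IsMulLeftInvariant] (U : Matrix.unitaryGroup (Fin d) ℂ) :
    (∫ V, (‖Matrix.trace ((U : Matrix (Fin d) (Fin d) ℂ)ᴴ *
        (V : Matrix (Fin d) (Fin d) ℂ))‖) ^ 4 ∂μ)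
      = ∫ V, (‖Matrix.trace ((V : Matrix (Fin d) (Fin d) ℂ))‖) ^ 4 ∂μ := by
  have h : ∀ V : Matrix.unitaryGroup (Fin d) ℂ,
      (U : Matrix (Fin d) (Fin d) ℂ)ᴴ * (V : Matrix (Fin d) (Fin d) ℂ)
        = ((U⁻¹ * V : Matrix.unitaryGroup (Fin d) ℂ) : Matrix (Fin d) (Fin d) ℂ) := by
    intro V
    rw [Matrix.UnitaryGroup.mul_val, Matrix.UnitaryGroup.inv_val, Matrix.star_eq_conjTranspose]
  simp_rw [h]
  exact MeasureTheory.integral_mul_left_eq_self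
    (fun W : Matrix.unitaryGroup (Fin d) ℂ =>
      (‖Matrix.trace ((W : Matrix (Fin d) (Fin d) ℂ))‖) ^ 4) U⁻¹

end FrameAux

/-- **Frobenius distance to the Haar second moment equals the frame-potential difference.**
Let `d ≥ 1`, let `μ` be the Haar probability measure on `U(d)` (a left- and right-invariant
Borel probability measure), and let `E = {(pᵢ, Uᵢ)}` be a finite ensemble of unitaries
(`pᵢ ≥ 0`, `Σᵢ pᵢ = 1`, `Uᵢ ∈ U(d)`).  With
`M_E = Σᵢ pᵢ • (Uᵢ ⊗ Uᵢ ⊗ conj(Uᵢ) ⊗ conj(Uᵢ))` and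
`M_H = ∫ U ⊗ U ⊗ conj(U) ⊗ conj(U) dμ(U)`, the squared Frobenius distance
`tr((M_E - M_H)(M_E - M_H)ᴴ)` equals the frame-potential difference
`Σᵢⱼ pᵢ pⱼ |tr(Uᵢᴴ Uⱼ)|⁴ - ∫∫ |tr(Uᴴ V)|⁴ dμ(U) dμ(V)`. -/
theorem frobenius_distance_eq_frame_potential_difference (d : ℕ) (hd : 1 ≤ d)
    (μ : Measure (Matrix.unitaryGroup (Fin d) ℂ)) [IsProbabilityMeasure μ]
    [μ.IsMulLeftInvariant] [μ.IsMulRightInvariant]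
    (m : ℕ) (p : Fin m → ℝ) (hp : ∀ i, 0 ≤ p i) (hsum : ∑ i, p i = 1)
    (Us : Fin m → Matrix.unitaryGroup (Fin d) ℂ) :
    (Matrix.trace
        ((∑ i, (p i : ℂ) • secondMomentOp d (Us i) -
            ∫ U, secondMomentOp d (U : Matrix (Fin d) (Fin d) ℂ) ∂μ) *
          (∑ i, (p i : ℂ) • secondMomentOp d (Us i) -
            ∫ U, secondMomentOp d (U : Matrix (Fin d) (Fin d) ℂ) ∂μ)ᴴ)) =
      ((∑ i, ∑ j, p i * p j *
          ‖Matrix.trace ((Us i : Matrix (Fin d) (Fin d) ℂ)ᴴ *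
            (Us j : Matrix (Fin d) (Fin d) ℂ))‖ ^ 4 -
        ∫ U, ∫ V, ‖Matrix.trace ((U : Matrix (Fin d) (Fin d) ℂ)ᴴ *
          (V : Matrix (Fin d) (Fin d) ℂ))‖ ^ 4 ∂μ ∂μ : ℝ) : ℂ) := by
  classical
  set B : Matrix (((Fin d × Fin d) × Fin d) × Fin d) (((Fin d × Fin d) × Fin d) × Fin d) ℂ :=
    ∫ U, secondMomentOp d (U : Matrix (Fin d) (Fin d) ℂ) ∂μ with hB
  set A : Matrix (((Fin d × Fin d) × Fin d) × Fin d) (((Fin d × Fin d) × Fin d) × Fin d) ℂ :=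
    ∑ i, (p i : ℂ) • secondMomentOp d (Us i) with hA
  set c : ℝ := ∫ V, (‖Matrix.trace ((V : Matrix (Fin d) (Fin d) ℂ))‖) ^ 4 ∂μ with hc
  have hsumC : (∑ i, (p i : ℂ)) = 1 := by
    rw [← Complex.ofReal_sum, hsum, Complex.ofReal_one]
  -- trace (A * Bᴴ) = c
  have hMB : ∀ i, Matrix.trace (secondMomentOp d (Us i) * Bᴴ) = (c : ℂ) := by
    intro i
    rw [hB, FrameAux.trace_mul_ct_integral _ μ]
    calc (∫ U, Matrix.trace (secondMomentOp d (Us i) *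
            (secondMomentOp d (U : Matrix (Fin d) (Fin d) ℂ))ᴴ) ∂μ)
        = ∫ U, (((‖Matrix.trace ((Us i : Matrix (Fin d) (Fin d) ℂ)ᴴ *
            (U : Matrix (Fin d) (Fin d) ℂ))‖ ^ 4 : ℝ) : ℂ)) ∂μ := by
          simp_rw [FrameAux.key_trace]
      _ = ((∫ U, (‖Matrix.trace ((Us i : Matrix (Fin d) (Fin d) ℂ)ᴴ *
            (U : Matrix (Fin d) (Fin d) ℂ))‖) ^ 4 ∂μ : ℝ) : ℂ) := integral_ofReal
      _ = (c : ℂ) := by rw [FrameAux.inner_integral_const μ (Us i), hc]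
  have hAB : Matrix.trace (A * Bᴴ) = (c : ℂ) := by
    rw [hA, Finset.sum_mul]
    simp_rw [Matrix.smul_mul, Matrix.trace_sum, Matrix.trace_smul, smul_eq_mul, hMB,
      ← Finset.sum_mul, hsumC, one_mul]
  have hBA : Matrix.trace (B * Aᴴ) = (c : ℂ) := by
    have h1 : Matrix.trace (B * Aᴴ) = star (Matrix.trace (A * Bᴴ)) := by
      rw [← Matrix.trace_conjTranspose, Matrix.conjTranspose_mul,
        Matrix.conjTranspose_conjTranspose]
    rw [h1, hAB]
    exact Complex.conj_ofReal c
  have hBB : Matrix.trace (B * Bᴴ) = (c : ℂ) := by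
    have h0 := FrameAux.trace_integral_mul_ct (d := d) B μ
    rw [← hB] at h0
    rw [h0]
    have h1 : ∀ U : Matrix.unitaryGroup (Fin d) ℂ,
        Matrix.trace (secondMomentOp d (U : Matrix (Fin d) (Fin d) ℂ) * Bᴴ) = (c : ℂ) := by
      intro U
      rw [hB, FrameAux.trace_mul_ct_integral _ μ]
      calc (∫ V, Matrix.trace (secondMomentOp d (U : Matrix (Fin d) (Fin d) ℂ) *
              (secondMomentOp d (V : Matrix (Fin d) (Fin d) ℂ))ᴴ) ∂μ)
          = ∫ V, (((‖Matrix.trace ((U : Matrix (Fin d) (Fin d) ℂ)ᴴ *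
              (V : Matrix (Fin d) (Fin d) ℂ))‖ ^ 4 : ℝ) : ℂ)) ∂μ := by
            simp_rw [FrameAux.key_trace]
        _ = ((∫ V, (‖Matrix.trace ((U : Matrix (Fin d) (Fin d) ℂ)ᴴ *
              (V : Matrix (Fin d) (Fin d) ℂ))‖) ^ 4 ∂μ : ℝ) : ℂ) := integral_ofReal
        _ = (c : ℂ) := by rw [FrameAux.inner_integral_const μ U, hc]
    simp_rw [h1]
    simp
  have hAA : Matrix.trace (A * Aᴴ) = ∑ i, ∑ j, ((p i * p j *
      ‖Matrix.trace ((Us i : Matrix (Fin d) (Fin d) ℂ)ᴴ *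
        (Us j : Matrix (Fin d) (Fin d) ℂ))‖ ^ 4 : ℝ) : ℂ) := by
    have hAH : Aᴴ = ∑ j, (p j : ℂ) • (secondMomentOp d (Us j))ᴴ := by
      rw [hA, Matrix.conjTranspose_sum]
      refine Finset.sum_congr rfl fun j _ => ?_
      rw [Matrix.conjTranspose_smul, Complex.star_def, Complex.conj_ofReal]
    calc Matrix.trace (A * Aᴴ)
        = ∑ i, ∑ j, (p i : ℂ) * ((p j : ℂ) *
            Matrix.trace (secondMomentOp d (Us i) * (secondMomentOp d (Us j))ᴴ)) := by
          rw [hA, hAH, Finset.sum_mul]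
          simp only [Matrix.smul_mul, Matrix.mul_sum, Matrix.mul_smul, Matrix.trace_sum,
            Matrix.trace_smul, smul_eq_mul, Finset.mul_sum]
          exact Finset.sum_congr rfl fun i _ => Finset.sum_congr rfl fun j _ => by ring
      _ = ∑ i, ∑ j, ((p i * p j *
            ‖Matrix.trace ((Us i : Matrix (Fin d) (Fin d) ℂ)ᴴ *
              (Us j : Matrix (Fin d) (Fin d) ℂ))‖ ^ 4 : ℝ) : ℂ) := by
          refine Finset.sum_congr rfl fun i _ => Finset.sum_congr rfl fun j _ => ?_
          rw [FrameAux.key_trace]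
          push_cast
          ring
  have hRHS2 : (∫ U, ∫ V, ‖Matrix.trace ((U : Matrix (Fin d) (Fin d) ℂ)ᴴ *
      (V : Matrix (Fin d) (Fin d) ℂ))‖ ^ 4 ∂μ ∂μ) = c := by
    have h1 : ∀ U : Matrix.unitaryGroup (Fin d) ℂ,
        (∫ V, ‖Matrix.trace ((U : Matrix (Fin d) (Fin d) ℂ)ᴴ *
          (V : Matrix (Fin d) (Fin d) ℂ))‖ ^ 4 ∂μ) = c := fun U => by
      rw [FrameAux.inner_integral_const μ U, hc]
    simp_rw [h1]
    simp
  have hexpand : Matrix.trace ((A - B) * (A - B)ᴴ)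
      = Matrix.trace (A * Aᴴ) - Matrix.trace (A * Bᴴ) -
        (Matrix.trace (B * Aᴴ) - Matrix.trace (B * Bᴴ)) := by
    rw [Matrix.conjTranspose_sub, Matrix.sub_mul, Matrix.mul_sub, Matrix.mul_sub,
      Matrix.trace_sub, Matrix.trace_sub, Matrix.trace_sub]
  rw [hexpand, hAA, hAB, hBA, hBB, hRHS2]
  push_cast
  ring
end
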